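/- If a junction edge e of an abstract road graph G cannot be completely covered by a well-shaped label, then no label in any labeling of G covers e; consequently the graph G' obtained by deleting e admits an optimal labeling with the same number of labeled road sections as G. -/

import Mathlib

open Classical
noncomputable section

/-- An abstract road graph: a (multi)graph with directed edge incidences,
a partition of edges into road sections (`isRS`) and junction edges,
a road assignment, and a positive length for each edge. -/
structure RoadGraph (V E : Type) where
  inc : E → V × V
  isRS : E → Prop
  road : E → ℕ
  len : E → ℝ
  len_pos : ∀ e, 0 < len e

namespace RoadGraph

variable {V E : Type}

/-- A (candidate) label: the path of covered edges together with the head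
offset `s` on the first edge and the tail offset `t` on the last edge. -/
structure Lab (E : Type) where
  path : List E
  s : ℝ
  t : ℝ

/-- The internal (completely covered) edges of a label. -/
def Lab.interiorEdges (ℓ : Lab E) : List E := (ℓ.path.drop 1).dropLast

/-- The set of covered positions of a label on an edge `e`. -/
noncomputable def coveredSet (G : RoadGraph V E) (ℓ : Lab E) (e : E) : Set ℝ :=
  if ℓ.path.length = 1 then (if ℓ.path = [e] then Set.Icc ℓ.s ℓ.t else ∅)
  else if ℓ.path.head? = some e then Set.Icc ℓ.s (G.len e)
  else if ℓ.path.getLast? = some e then Set.Icc 0 ℓ.t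
  else if e ∈ ℓ.path then Set.Icc 0 (G.len e) else ∅

/-- The length of the curve described by a label. -/
noncomputable def labLength (G : RoadGraph V E) (ℓ : Lab E) : ℝ :=
  match ℓ.path with
  | [] => 0
  | [e] => ℓ.t - ℓ.s
  | e :: rest => (G.len e - ℓ.s) + ((rest.dropLast).map G.len).sum + ℓ.t

/-- Validity of a label w.r.t. the road graph `G` and the road-name lengths `lam`:
the covered edges form a nonempty simple directed path of edges of one road,
the label starts and ends on road sections with offsets inside the edges,
and the total length equals the name length of the road. -/
def Valid (G : RoadGraph V E) (lam : ℕ → ℝ) (ℓ : Lab E) : Prop :=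
  ℓ.path ≠ [] ∧ ℓ.path.Nodup ∧
  List.Chain' (fun e f => (G.inc e).2 = (G.inc f).1) ℓ.path ∧
  (∀ e ∈ ℓ.path, ∀ f ∈ ℓ.path, G.road e = G.road f) ∧
  (∀ e, ℓ.path.head? = some e → G.isRS e ∧ 0 ≤ ℓ.s ∧ ℓ.s ≤ G.len e) ∧
  (∀ e, ℓ.path.getLast? = some e → G.isRS e ∧ 0 ≤ ℓ.t ∧ ℓ.t ≤ G.len e) ∧
  (ℓ.path.length = 1 → ℓ.s ≤ ℓ.t) ∧
  (∀ e, ℓ.path.head? = some e → labLength G ℓ = lam (G.road e))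

/-- `(e, x)` is the head or the tail point of the label `ℓ`. -/
def isEndPt (ℓ : Lab E) (e : E) (x : ℝ) : Prop :=
  (ℓ.path.head? = some e ∧ x = ℓ.s) ∨ (ℓ.path.getLast? = some e ∧ x = ℓ.t)

/-- Two labels overlap if they share a point that is not the head/tail of both. -/
def Overlap (G : RoadGraph V E) (ℓ ℓ' : Lab E) : Prop :=
  ∃ e x, x ∈ coveredSet G ℓ e ∧ x ∈ coveredSet G ℓ' e ∧
    ¬(isEndPt ℓ e x ∧ isEndPt ℓ' e x)

/-- A labeling: a set of valid, well-shaped, mutually non-overlapping labels. -/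
def IsLabeling (G : RoadGraph V E) (lam : ℕ → ℝ) (WS : Lab E → Prop)
    (L : Set (Lab E)) : Prop :=
  (∀ ℓ ∈ L, Valid G lam ℓ ∧ WS ℓ) ∧
  (∀ ℓ ∈ L, ∀ ℓ' ∈ L, ℓ ≠ ℓ' → ¬ Overlap G ℓ ℓ')

/-- The set of road sections labeled by a set of labels. -/
def labeledSecs (G : RoadGraph V E) (L : Set (Lab E)) : Set E :=
  {e | G.isRS e ∧ ∃ ℓ ∈ L, e ∈ ℓ.path}

/-- The number of labeled road sections. -/
noncomputable def countLabeled (G : RoadGraph V E) (L : Set (Lab E)) : ℕ :=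
  (labeledSecs G L).ncard

/-- An optimal labeling: a solution of MaxTotalCovering. -/
def Optimal (G : RoadGraph V E) (lam : ℕ → ℝ) (WS : Lab E → Prop)
    (L : Set (Lab E)) : Prop :=
  IsLabeling G lam WS L ∧
  ∀ L', IsLabeling G lam WS L' → countLabeled G L' ≤ countLabeled G L

/-- A well-shaped label fits entirely on the road section `e`. -/
def Stub (G : RoadGraph V E) (lam : ℕ → ℝ) (WS : Lab E → Prop) (e : E) : Prop :=
  G.isRS e ∧ ∃ ℓ : Lab E, Valid G lam ℓ ∧ WS ℓ ∧ ℓ.path = [e]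

/-- Edge `e` is incident to vertex `v`. -/
def incident (G : RoadGraph V E) (e : E) (v : V) : Prop :=
  (G.inc e).1 = v ∨ (G.inc e).2 = v

/-- One step through a junction edge. -/
def JStep (G : RoadGraph V E) (v w : V) : Prop :=
  ∃ f, ¬ G.isRS f ∧ ((G.inc f) = (v, w) ∨ (G.inc f) = (w, v))

/-- Reachability through junction edges only. -/
def JReach (G : RoadGraph V E) : V → V → Prop := Relation.ReflTransGen (JStep G)

/-- `Re G e u`: road sections of the road of `e` reachable from `u`
when traversing junction edges only. -/
def Re (G : RoadGraph V E) (e : E) (u : V) : Set E :=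
  {e' | G.isRS e' ∧ G.road e' = G.road e ∧ ∃ v, JReach G u v ∧ incident G e' v}

end RoadGraph

open RoadGraph in
/-- If a junction edge `e` cannot be completely covered by a
well-shaped label, then no label in any labeling covers `e`; consequently
deleting `e` preserves the achievable numbers of labeled road sections. -/
theorem stmt0 {V E : Type} (G : RoadGraph V E) (lam : ℕ → ℝ) (WS : Lab E → Prop)
    (e : E) (hjunc : ¬ G.isRS e)
    (hnocover : ¬ ∃ ℓ : Lab E, Valid G lam ℓ ∧ WS ℓ ∧ e ∈ ℓ.interiorEdges) :
    (∀ L : Set (Lab E), IsLabeling G lam WS L → ∀ ℓ ∈ L, e ∉ ℓ.path) ∧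
    (∀ n : ℕ,
      (∃ L, IsLabeling G lam WS L ∧ countLabeled G L = n) ↔
      (∃ L, IsLabeling G lam WS L ∧ (∀ ℓ ∈ L, e ∉ ℓ.path) ∧
        countLabeled G L = n)) := by
  have key : ∀ ℓ : Lab E, Valid G lam ℓ → WS ℓ → e ∉ ℓ.path := by
    intro ℓ hv hws hmem
    apply hnocover
    refine ⟨ℓ, hv, hws, ?_⟩
    obtain ⟨hne, _, _, _, hhead, hlast, _, _⟩ := hv
    have hh : ℓ.path.head? ≠ some e := fun h => hjunc (hhead e h).1
    have hl : ℓ.path.getLast? ≠ some e := fun h => hjunc (hlast e h).1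
    cases hp : ℓ.path with
    | nil => rw [hp] at hmem; exact absurd hmem List.not_mem_nil
    | cons a rest =>
      rw [hp] at hmem hh hl
      have hea : e ≠ a := by
        intro h; exact hh (by simp [h])
      have hrest : e ∈ rest := by
        rcases List.mem_cons.mp hmem with h | h
        · exact absurd h hea
        · exact h
      have hrne : rest ≠ [] := List.ne_nil_of_mem hrest
      have hgl : (a :: rest).getLast (by simp) = rest.getLast hrne :=
        List.getLast_cons hrne
      have hel : e ≠ rest.getLast hrne := by
        intro h
        apply hl
        rw [List.getLast?_eq_getLast (l := a :: rest) (by simp), hgl, ← h]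
      have : rest.dropLast ++ [rest.getLast hrne] = rest :=
        List.dropLast_append_getLast hrne
      rw [← this] at hrest
      rcases List.mem_append.mp hrest with h | h
      · simp only [Lab.interiorEdges, hp, List.drop_succ_cons, List.drop_zero]
        simpa [this] using h
      · exact absurd (List.mem_singleton.mp h) hel
  constructor
  · intro L hL ℓ hmem
    exact key ℓ ((hL.1 ℓ hmem).1) ((hL.1 ℓ hmem).2)
  · intro n
    constructor
    · rintro ⟨L, hL, hc⟩
      exact ⟨L, hL, fun ℓ hm => key ℓ ((hL.1 ℓ hm).1) ((hL.1 ℓ hm).2), hc⟩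
    · rintro ⟨L, hL, _, hc⟩
      exact ⟨L, hL, hc⟩
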